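/- arXiv:math/0702873 — 2 statements merged into one kernel-verified Lean document; each statement's English description precedes it below -/
import Mathlib

section
/- Let G be a 2-connected, locally finite, infinite graph. Then every finite subgraph H of G is contained in some finite 2-connected subgraph H' of G. -/
/-- A graph is 2-connected if it is connected, has at least 3 vertices, and
remains connected after deleting any single vertex. -/
def TwoConnected {V : Type*} (G : SimpleGraph V) : Prop :=
  G.Connected ∧ (∃ x y z : V, x ≠ y ∧ y ≠ z ∧ x ≠ z) ∧
    ∀ v : V, ((⊤ : G.Subgraph).deleteVerts {v}).coe.Connected

section Aux

open SimpleGraph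

variable {V : Type*} {G : SimpleGraph V}

/-- Reachability in a subgraph's coercion from a walk lying in the subgraph. -/
lemma aux_reach_in_coe {K : G.Subgraph} : ∀ {x y : V} (P : G.Walk x y)
    (hs : ∀ z ∈ P.support, z ∈ K.verts) (he : ∀ e ∈ P.edges, e ∈ K.edgeSet),
    K.coe.Reachable ⟨x, hs x P.start_mem_support⟩ ⟨y, hs y P.end_mem_support⟩ := by
  intro x y P
  induction P with
  | nil => intro hs he; rfl
  | @cons a b c h p ih =>
    intro hs he
    have hadj : K.Adj a b := he s(a, b) (by simp)
    have hs' : ∀ z ∈ p.support, z ∈ K.verts := fun z hz => hs z (by simp [hz])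
    have he' : ∀ e ∈ p.edges, e ∈ K.edgeSet := fun e hez => he e (by simp [hez])
    exact (SimpleGraph.Adj.reachable (by exact hadj : K.coe.Adj ⟨a, _⟩ ⟨b, _⟩)).trans
      (ih hs' he')

lemma aux_reach_in_del {K : G.Subgraph} {w : ↑K.verts} : ∀ {x y : V} (P : G.Walk x y)
    (hs : ∀ z ∈ P.support, z ∈ K.verts) (he : ∀ e ∈ P.edges, e ∈ K.edgeSet)
    (hw : (w : V) ∉ P.support)
    (hx : (⟨x, hs x P.start_mem_support⟩ : ↑K.verts) ∈
      ((⊤ : K.coe.Subgraph).deleteVerts {w}).verts)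
    (hy : (⟨y, hs y P.end_mem_support⟩ : ↑K.verts) ∈
      ((⊤ : K.coe.Subgraph).deleteVerts {w}).verts),
    ((⊤ : K.coe.Subgraph).deleteVerts {w}).coe.Reachable ⟨_, hx⟩ ⟨_, hy⟩ := by
  intro x y P
  induction P with
  | nil => intro hs he hw hx hy; rfl
  | @cons a b c h p ih =>
    intro hs he hw hx hy
    have hadj : K.Adj a b := he s(a, b) (by simp)
    have hs' : ∀ z ∈ p.support, z ∈ K.verts := fun z hz => hs z (by simp [hz])
    have he' : ∀ e ∈ p.edges, e ∈ K.edgeSet := fun e hez => he e (by simp [hez])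
    have hw' : (w : V) ∉ p.support := fun hh => hw (by simp [hh])
    have hb : (⟨b, hs' b p.start_mem_support⟩ : ↑K.verts) ∈
        ((⊤ : K.coe.Subgraph).deleteVerts {w}).verts := by
      refine ⟨Set.mem_univ _, ?_⟩
      simp only [Set.mem_singleton_iff]
      intro hh
      apply hw'
      have hwb : (w : V) = b := (congrArg Subtype.val hh).symm
      rw [hwb]; exact p.start_mem_support
    refine (SimpleGraph.Adj.reachable ?_).trans (ih hs' he' hw' hb hy)
    exact ⟨hx, hb, hadj⟩

/-- If `P` is a path from `u` to `v`, `x ∈ P.support`, `x ≠ w`, then there is a walk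
from `x` to one of the endpoints avoiding `w`, inside `P`. -/
lemma aux_split {u v x w : V} (P : G.Walk u v) (hP : P.IsPath)
    (hx : x ∈ P.support) (hxw : x ≠ w) :
    ∃ (s : V) (Q : G.Walk x s), (s = u ∨ s = v) ∧ w ∉ Q.support ∧
      (∀ z ∈ Q.support, z ∈ P.support) ∧ (∀ e ∈ Q.edges, e ∈ P.edges) := by
  classical
  set P1 := P.takeUntil x hx with hP1
  set P2 := P.dropUntil x hx with hP2
  by_cases hw1 : w ∈ P1.support
  · -- then w ∉ P2.support; use P2 : Walk x v
    refine ⟨v, P2, Or.inr rfl, ?_, fun z hz => P.support_dropUntil_subset hx hz,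
      fun e he => P.edges_dropUntil_subset hx he⟩
    -- nodup of P.support
    have hnd : P.support.Nodup := hP.support_nodup
    have hspec : P1.append P2 = P := P.take_spec hx
    have hsupp : P.support = P1.support ++ P2.support.tail := by
      rw [← hspec, Walk.support_append]
    rw [hsupp] at hnd
    have hdisj := (List.nodup_append'.mp hnd).2.2
    intro hw2
    rw [P2.support_eq_cons, List.mem_cons] at hw2
    rcases hw2 with h1 | h1
    · exact hxw h1.symm
    · exact hdisj hw1 h1
  · -- use P1.reverse : Walk x u
    refine ⟨u, P1.reverse, Or.inl rfl, ?_, ?_, ?_⟩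
    · rw [Walk.support_reverse]; simpa using hw1
    · intro z hz
      rw [Walk.support_reverse, List.mem_reverse] at hz
      exact P.support_takeUntil_subset hx hz
    · intro e he
      rw [Walk.edges_reverse, List.mem_reverse] at he
      exact P.edges_takeUntil_subset hx he

/-- In a graph that is connected and stays connected after deleting any vertex,
between any two vertices there is a path avoiding any given third vertex. -/
lemma aux_exists_avoid (hconn : G.Connected)
    (hdel : ∀ w : V, ((⊤ : G.Subgraph).deleteVerts {w}).coe.Connected)
    (u v w : V) :
    ∃ q : G.Walk u v, q.IsPath ∧ (u ≠ w → v ≠ w → w ∉ q.support) := by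
  classical
  by_cases h : u ≠ w ∧ v ≠ w
  · obtain ⟨hu, hv⟩ := h
    have hu' : u ∈ ((⊤ : G.Subgraph).deleteVerts {w}).verts := by simp [hu]
    have hv' : v ∈ ((⊤ : G.Subgraph).deleteVerts {w}).verts := by simp [hv]
    obtain ⟨p⟩ := (hdel w).preconnected ⟨u, hu'⟩ ⟨v, hv'⟩
    set q0 : G.Walk u v := p.map (SimpleGraph.Subgraph.hom _) with hq0
    refine ⟨q0.bypass, q0.bypass_isPath, fun _ _ hw => ?_⟩
    have := q0.support_bypass_subset hw
    replace this : w ∈ (p.map (SimpleGraph.Subgraph.hom _)).support := this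
    rw [Walk.support_map, List.mem_map] at this
    obtain ⟨t, _, ht⟩ := this
    have := t.2.2
    simp only [Set.mem_singleton_iff] at this
    exact this ht
  · obtain ⟨p⟩ := hconn.preconnected u v
    refine ⟨p.bypass, p.bypass_isPath, fun hu hv => ?_⟩
    exact absurd ⟨hu, hv⟩ h

theorem stmt0_main (G : SimpleGraph V) [Infinite V]
    (hconn : G.Connected)
    (hdel : ∀ v : V, ((⊤ : G.Subgraph).deleteVerts {v}).coe.Connected)
    (H : G.Subgraph) (hHv : H.verts.Finite) :
    ∃ H' : G.Subgraph, H'.verts.Finite ∧ H ≤ H' ∧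
      (H'.coe.Connected ∧ (∃ x y z : ↑H'.verts, x ≠ y ∧ y ≠ z ∧ x ≠ z) ∧
        ∀ v : ↑H'.verts, ((⊤ : H'.coe.Subgraph).deleteVerts {v}).coe.Connected) := by
  classical
  obtain ⟨a, b, hab⟩ := exists_pair_ne V
  obtain ⟨c, hc'⟩ := Infinite.exists_notMem_finset ({a, b} : Finset V)
  simp only [Finset.mem_insert, Finset.mem_singleton, not_or] at hc'
  have hbc : b ≠ c := fun h => hc'.2 h.symm
  have hac : a ≠ c := fun h => hc'.1 h.symm
  have hp : ∀ u : V, ∃ W : G.Walk a u, True := fun u => ⟨(hconn.preconnected a u).some, trivial⟩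
  choose p _ using hp
  set S0 : Set V := insert a (insert b (insert c H.verts)) with hS0
  have hS0fin : S0.Finite := ((hHv.insert c).insert b).insert a
  set H1 : G.Subgraph := H ⊔ ⨆ u ∈ S0, (p u).toSubgraph with hH1
  have hp_le : ∀ u ∈ S0, (p u).toSubgraph ≤ H1 := fun u hu =>
    le_sup_of_le_right (le_iSup₂ (f := fun u (_ : u ∈ S0) => (p u).toSubgraph) u hu)
  set S1 : Set V := H1.verts with hS1
  have hS1eq : S1 = H.verts ∪ ⋃ u ∈ S0, (p u).toSubgraph.verts := by
    rw [hS1, hH1, Subgraph.verts_sup]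
    congr 1
    simp only [Subgraph.verts_iSup]
  have hS1fin : S1.Finite := by
    rw [hS1eq]
    refine hHv.union (hS0fin.biUnion fun u _ => ?_)
    rw [SimpleGraph.Walk.verts_toSubgraph]
    exact (p u).support.finite_toSet
  have hS0S1 : S0 ⊆ S1 := by
    intro u hu
    rw [hS1eq]
    exact Or.inr (Set.mem_biUnion hu ((p u).end_mem_verts_toSubgraph))
  have haS1 : a ∈ S1 := hS0S1 (by simp [hS0])
  have hbS1 : b ∈ S1 := hS0S1 (by simp [hS0])
  have hcS1 : c ∈ S1 := hS0S1 (by simp [hS0])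
  have claim_base : ∀ s ∈ S1, ∃ W : G.Walk a s,
      (∀ z ∈ W.support, z ∈ S1) ∧ (∀ e ∈ W.edges, e ∈ H1.edgeSet) := by
    intro s hs
    rw [hS1eq] at hs
    have key : ∃ u ∈ S0, s ∈ (p u).support := by
      rcases hs with h | h
      · exact ⟨s, by simp [hS0, h], (p s).end_mem_support⟩
      · obtain ⟨u, hu, hsu⟩ := Set.mem_iUnion₂.mp h
        exact ⟨u, hu, (SimpleGraph.Walk.mem_verts_toSubgraph _).mp hsu⟩
    obtain ⟨u, hu, hsu⟩ := key
    refine ⟨(p u).takeUntil s hsu, fun z hz => ?_, fun e he => ?_⟩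
    · have hz' : z ∈ (p u).support := (p u).support_takeUntil_subset hsu hz
      rw [hS1eq]
      exact Or.inr (Set.mem_biUnion hu ((SimpleGraph.Walk.mem_verts_toSubgraph _).mpr hz'))
    · have he' : e ∈ (p u).edges := (p u).edges_takeUntil_subset hsu he
      exact Subgraph.edgeSet_mono (hp_le u hu)
        ((SimpleGraph.Walk.mem_edges_toSubgraph _).mpr he')
  have hA : ∀ u v w : V, ∃ q : G.Walk u v, q.IsPath ∧ (u ≠ w → v ≠ w → w ∉ q.support) :=
    fun u v w => aux_exists_avoid hconn hdel u v w
  choose q hqpath hqavoid using hA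
  set K : G.Subgraph := H1 ⊔ ⨆ u ∈ S1, ⨆ v ∈ S1, ⨆ w ∈ S1, (q u v w).toSubgraph with hK
  have hq_le : ∀ u ∈ S1, ∀ v ∈ S1, ∀ w ∈ S1, (q u v w).toSubgraph ≤ K := by
    intro u hu v hv w hw
    refine le_sup_of_le_right ?_
    refine le_trans (le_iSup₂ (f := fun w (_ : w ∈ S1) => (q u v w).toSubgraph) w hw) ?_
    refine le_trans (le_iSup₂ (f := fun v (_ : v ∈ S1) =>
      ⨆ w ∈ S1, (q u v w).toSubgraph) v hv) ?_
    exact le_iSup₂ (f := fun u (_ : u ∈ S1) =>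
      ⨆ v ∈ S1, ⨆ w ∈ S1, (q u v w).toSubgraph) u hu
  have hH1K : H1 ≤ K := le_sup_left
  have hKeq : K.verts = S1 ∪ ⋃ u ∈ S1, ⋃ v ∈ S1, ⋃ w ∈ S1, (q u v w).toSubgraph.verts := by
    rw [hK, Subgraph.verts_sup]
    congr 1
    simp only [Subgraph.verts_iSup]
  have hKfin : K.verts.Finite := by
    rw [hKeq]
    refine hS1fin.union (hS1fin.biUnion fun u _ => hS1fin.biUnion fun v _ =>
      hS1fin.biUnion fun w _ => ?_)
    rw [SimpleGraph.Walk.verts_toSubgraph]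
    exact (q u v w).support.finite_toSet
  have hS1K : S1 ⊆ K.verts := by rw [hKeq]; exact Set.subset_union_left
  have hHK : H ≤ K := le_trans le_sup_left hH1K
  -- decomposition of K.verts
  have hKcases : ∀ x ∈ K.verts, x ∈ S1 ∨
      ∃ u ∈ S1, ∃ v ∈ S1, ∃ w ∈ S1, x ∈ (q u v w).support := by
    intro x hx
    rw [hKeq] at hx
    rcases hx with h | h
    · exact Or.inl h
    · obtain ⟨u, hu, h⟩ := Set.mem_iUnion₂.mp h
      obtain ⟨v, hv, h⟩ := Set.mem_iUnion₂.mp h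
      obtain ⟨w, hw, h⟩ := Set.mem_iUnion₂.mp h
      exact Or.inr ⟨u, hu, v, hv, w, hw, (SimpleGraph.Walk.mem_verts_toSubgraph _).mp h⟩
  -- reachability to a in K.coe
  have reach_base : ∀ s (hs : s ∈ S1),
      K.coe.Reachable ⟨s, hS1K hs⟩ ⟨a, hS1K haS1⟩ := by
    intro s hs
    obtain ⟨W, hWs, hWe⟩ := claim_base s hs
    exact (aux_reach_in_coe W (fun z hz => hS1K (hWs z hz))
      (fun e he => Subgraph.edgeSet_mono hH1K (hWe e he))).symm
  have reach_any : ∀ x (hx : x ∈ K.verts),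
      K.coe.Reachable ⟨x, hx⟩ ⟨a, hS1K haS1⟩ := by
    intro x hx
    rcases hKcases x hx with h | ⟨u, hu, v, hv, w, hw, hxs⟩
    · exact reach_base x h
    · have hle := hq_le u hu v hv w hw
      set W := (q u v w).takeUntil x hxs with hW
      have hWs : ∀ z ∈ W.support, z ∈ K.verts := fun z hz =>
        Subgraph.verts_mono hle ((SimpleGraph.Walk.mem_verts_toSubgraph _).mpr
          ((q u v w).support_takeUntil_subset hxs hz))
      have hWe : ∀ e ∈ W.edges, e ∈ K.edgeSet := fun e he =>
        Subgraph.edgeSet_mono hle ((SimpleGraph.Walk.mem_edges_toSubgraph _).mpr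
          ((q u v w).edges_takeUntil_subset hxs he))
      exact ((aux_reach_in_coe W hWs hWe).symm).trans (reach_base u hu)
  have hKconn : K.coe.Connected := by
    rw [SimpleGraph.connected_iff]
    refine ⟨fun x y => ?_, ⟨⟨a, hS1K haS1⟩⟩⟩
    exact (reach_any ↑x x.2).trans (reach_any ↑y y.2).symm
  -- the triple
  have htriple : ∃ x y z : ↑K.verts, x ≠ y ∧ y ≠ z ∧ x ≠ z :=
    ⟨⟨a, hS1K haS1⟩, ⟨b, hS1K hbS1⟩, ⟨c, hS1K hcS1⟩,
      fun h => hab (congrArg Subtype.val h),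
      fun h => hbc (congrArg Subtype.val h),
      fun h => hac (congrArg Subtype.val h)⟩
  -- deletion connectivity
  have hdelK : ∀ v0 : ↑K.verts, ((⊤ : K.coe.Subgraph).deleteVerts {v0}).coe.Connected := by
    intro v0
    set w : V := ↑v0 with hwdef
    have DMem : ∀ (x : ↑K.verts), (x : V) ≠ w →
        x ∈ ((⊤ : K.coe.Subgraph).deleteVerts {v0}).verts := by
      intro x hx
      exact ⟨Set.mem_univ _, fun hh => hx (congrArg Subtype.val hh)⟩
    -- interconnection of S1
    have Del2 : ∀ s (hs : s ∈ S1) (hsw : s ≠ w) t (ht : t ∈ S1) (htw : t ≠ w),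
        ((⊤ : K.coe.Subgraph).deleteVerts {v0}).coe.Reachable
          ⟨⟨s, hS1K hs⟩, DMem _ hsw⟩ ⟨⟨t, hS1K ht⟩, DMem _ htw⟩ := by
      intro s hs hsw t ht htw
      by_cases hwS1 : w ∈ S1
      · have hle := hq_le s hs t ht w hwS1
        have hWs : ∀ z ∈ (q s t w).support, z ∈ K.verts := fun z hz =>
          Subgraph.verts_mono hle ((SimpleGraph.Walk.mem_verts_toSubgraph _).mpr hz)
        have hWe : ∀ e ∈ (q s t w).edges, e ∈ K.edgeSet := fun e he =>
          Subgraph.edgeSet_mono hle ((SimpleGraph.Walk.mem_edges_toSubgraph _).mpr he)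
        exact aux_reach_in_del (q s t w) hWs hWe (hqavoid s t w hsw htw)
          (DMem _ hsw) (DMem _ htw)
      · have haw : a ≠ w := fun h => hwS1 (h ▸ haS1)
        have base : ∀ r (hr : r ∈ S1) (hrw : r ≠ w),
            ((⊤ : K.coe.Subgraph).deleteVerts {v0}).coe.Reachable
              ⟨⟨r, hS1K hr⟩, DMem _ hrw⟩ ⟨⟨a, hS1K haS1⟩, DMem _ haw⟩ := by
          intro r hr hrw
          obtain ⟨W, hWs, hWe⟩ := claim_base r hr
          have havoid : w ∉ W.support := fun hh => hwS1 (hWs w hh)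
          exact (aux_reach_in_del W (fun z hz => hS1K (hWs z hz))
            (fun e he => Subgraph.edgeSet_mono hH1K (hWe e he)) havoid
            (DMem _ haw) (DMem _ hrw)).symm
        exact (base s hs hsw).trans (base t ht htw).symm
    -- every vertex connects to S1
    have Del1 : ∀ x (hx : x ∈ K.verts) (hxw : x ≠ w),
        ∃ s, ∃ (hs : s ∈ S1) (hsw : s ≠ w),
          ((⊤ : K.coe.Subgraph).deleteVerts {v0}).coe.Reachable
            ⟨⟨x, hx⟩, DMem _ hxw⟩ ⟨⟨s, hS1K hs⟩, DMem _ hsw⟩ := by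
      intro x hx hxw
      rcases hKcases x hx with h | ⟨u, hu, v, hv, w', hw', hxs⟩
      · exact ⟨x, h, hxw, SimpleGraph.Reachable.refl _⟩
      · obtain ⟨s, Q, hsor, hQw, hQs, hQe⟩ :=
          aux_split (q u v w') (hqpath u v w') hxs hxw
        have hsS1 : s ∈ S1 := by rcases hsor with h | h <;> subst h <;> assumption
        have hsw : s ≠ w := fun h => hQw (h ▸ Q.end_mem_support)
        have hle := hq_le u hu v hv w' hw'
        have hQs' : ∀ z ∈ Q.support, z ∈ K.verts := fun z hz =>
          Subgraph.verts_mono hle ((SimpleGraph.Walk.mem_verts_toSubgraph _).mpr (hQs z hz))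
        have hQe' : ∀ e ∈ Q.edges, e ∈ K.edgeSet := fun e he =>
          Subgraph.edgeSet_mono hle ((SimpleGraph.Walk.mem_edges_toSubgraph _).mpr (hQe e he))
        exact ⟨s, hsS1, hsw,
          aux_reach_in_del Q hQs' hQe' hQw (DMem _ hxw) (DMem _ hsw)⟩
    rw [SimpleGraph.connected_iff]
    constructor
    · rintro ⟨x, hxD⟩ ⟨y, hyD⟩
      have hxw : (x : V) ≠ w := fun h => hxD.2 (Subtype.ext h)
      have hyw : (y : V) ≠ w := fun h => hyD.2 (Subtype.ext h)
      obtain ⟨s1, hs1, hs1w, hr1⟩ := Del1 ↑x x.2 hxw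
      obtain ⟨s2, hs2, hs2w, hr2⟩ := Del1 ↑y y.2 hyw
      exact (hr1.trans (Del2 s1 hs1 hs1w s2 hs2 hs2w)).trans hr2.symm
    · by_cases haw : a = w
      · have hbw : b ≠ w := fun h => hab (haw ▸ h ▸ rfl)
        exact ⟨⟨⟨b, hS1K hbS1⟩, DMem _ hbw⟩⟩
      · exact ⟨⟨⟨a, hS1K haS1⟩, DMem _ haw⟩⟩
  exact ⟨K, hKfin, hHK, hKconn, htriple, hdelK⟩


end Aux

/-- Every finite subgraph of a 2-connected, locally finite, infinite graph is contained
in a finite 2-connected subgraph. -/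
theorem stmt0 {V : Type*} (G : SimpleGraph V) [G.LocallyFinite] [Infinite V]
    (h2 : TwoConnected G) (H : G.Subgraph) (hHv : H.verts.Finite) :
    ∃ H' : G.Subgraph, H'.verts.Finite ∧ H ≤ H' ∧ TwoConnected H'.coe := by
  obtain ⟨hconn, -, hdel⟩ := h2
  obtain ⟨K, h1, hle, hc, ht, hd⟩ := stmt0_main G hconn hdel H hHv
  exact ⟨K, h1, hle, hc, ht, hd⟩
end

section
/- Let H be a graph in which every vertex has the same degree k ≥ 1 and which has at least one edge. If H has a connected component containing a self-avoiding path of length 8 with consecutive edges e₁,…,e₈, and if for every path of this form the endpoint pairs {endpoints of e₃} ∪ {endpoints of e₆} span an additional edge f₂ (distinct from e₃,…,e₆) and {endpoints of e₁} ∪ {endpoints of e₈} span an additional edge f₁, then H contains two vertices x and y joined by three pairwise internally disjoint paths. -/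
/-- Two vertices joined by three pairwise distinct, pairwise internally disjoint paths. -/
def ThreeDisjointPaths {V : Type*} (G : SimpleGraph V) : Prop :=
  ∃ (x y : V), x ≠ y ∧ ∃ (p₁ p₂ p₃ : G.Walk x y),
    p₁.IsPath ∧ p₂.IsPath ∧ p₃.IsPath ∧ p₁ ≠ p₂ ∧ p₁ ≠ p₃ ∧ p₂ ≠ p₃ ∧
    (∀ v : V, v ∈ p₁.support → v ∈ p₂.support → v = x ∨ v = y) ∧
    (∀ v : V, v ∈ p₁.support → v ∈ p₃.support → v = x ∨ v = y) ∧
    (∀ v : V, v ∈ p₂.support → v ∈ p₃.support → v = x ∨ v = y)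

/-- A self-avoiding path of length 8 in `G`, recorded by its 9 distinct consecutive
vertices `v 0, …, v 8`. -/
def IsSAP8 {V : Type*} (G : SimpleGraph V) (v : ℕ → V) : Prop :=
  (∀ i < 8, G.Adj (v i) (v (i + 1))) ∧
  (∀ i ≤ 8, ∀ j ≤ 8, v i = v j → i = j)

namespace Stmt13Aux

open SimpleGraph

variable {V : Type*} {H : SimpleGraph V} {v : ℕ → V}

/-- Walk along `v` from `v i` to `v (i+n)`. -/
def segN (hadj : ∀ i < 8, H.Adj (v i) (v (i + 1))) (i : ℕ) :
    ∀ n : ℕ, i + n ≤ 8 → H.Walk (v i) (v (i + n))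
  | 0, _ => Walk.nil
  | n + 1, h => (segN hadj i n (by omega)).concat (hadj (i + n) (by omega))

lemma support_segN (hadj : ∀ i < 8, H.Adj (v i) (v (i + 1))) (i : ℕ) :
    ∀ (n : ℕ) (h : i + n ≤ 8),
      (segN hadj i n h).support = (List.range' i (n + 1)).map v
  | 0, _ => by simp [segN]
  | n + 1, h => by
    rw [segN, Walk.support_concat, support_segN hadj i n (by omega)]
    have hr : List.range' i (n + 1 + 1) = List.range' i (n + 1) ++ [i + (n + 1)] := by
      simpa using List.range'_concat (step := 1) (s := i) (n := n + 1)
    rw [hr, List.map_append]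
    rfl

lemma length_segN (hadj : ∀ i < 8, H.Adj (v i) (v (i + 1))) (i : ℕ) :
    ∀ (n : ℕ) (h : i + n ≤ 8), (segN hadj i n h).length = n
  | 0, _ => rfl
  | n + 1, h => by
    rw [segN, Walk.length_concat, length_segN hadj i n (by omega)]

/-- Walk along `v` from `v i` to `v j`, `i ≤ j ≤ 8`. -/
def seg (hadj : ∀ i < 8, H.Adj (v i) (v (i + 1))) (i j : ℕ) (hij : i ≤ j) (hj : j ≤ 8) :
    H.Walk (v i) (v j) :=
  (segN hadj i (j - i) (by omega)).copy rfl (by congr 1; omega)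

lemma support_seg (hadj : ∀ i < 8, H.Adj (v i) (v (i + 1))) (i j : ℕ)
    (hij : i ≤ j) (hj : j ≤ 8) :
    (seg hadj i j hij hj).support = (List.range' i (j - i + 1)).map v := by
  rw [seg, Walk.support_copy, support_segN]

lemma length_seg (hadj : ∀ i < 8, H.Adj (v i) (v (i + 1))) (i j : ℕ)
    (hij : i ≤ j) (hj : j ≤ 8) :
    (seg hadj i j hij hj).length = j - i := by
  rw [seg, Walk.length_copy, length_segN]

lemma main (hadj : ∀ i < 8, H.Adj (v i) (v (i + 1)))
    (hinj : ∀ i ≤ 8, ∀ j ≤ 8, v i = v j → i = j)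
    {ia ib ic id : ℕ}
    (hab : H.Adj (v ia) (v ib)) (hcd : H.Adj (v ic) (v id))
    (h1 : 2 ≤ ia) (h2 : ia ≤ 3) (h3 : 5 ≤ ib) (h4 : ib ≤ 6)
    (h5 : ic ≤ 1) (h6 : 7 ≤ id) (h7 : id ≤ 8) :
    ThreeDisjointPaths H := by
  have hICA : ic ≤ ia := by omega
  have hIAB : ia ≤ ib := by omega
  have hIBD : ib ≤ id := by omega
  refine ⟨v ia, v ib, fun h => by have := hinj ia (by omega) ib (by omega) h; omega, ?_⟩
  set p₁ : H.Walk (v ia) (v ib) := seg hadj ia ib hIAB (by omega) with hp₁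
  set p₂ : H.Walk (v ia) (v ib) := Walk.cons hab Walk.nil with hp₂
  set p₃ : H.Walk (v ia) (v ib) :=
    (seg hadj ic ia hICA (by omega)).reverse.append
      (Walk.cons hcd (seg hadj ib id hIBD h7).reverse) with hp₃
  have hs₁ : p₁.support = (List.range' ia (ib - ia + 1)).map v := support_seg ..
  have hs₂ : p₂.support = [v ia, v ib] := by simp [hp₂]
  have hs₃ : p₃.support =
      ((List.range' ic (ia - ic + 1)).reverse ++ (List.range' ib (id - ib + 1)).reverse).map v := by
    rw [hp₃, Walk.support_append, Walk.support_reverse, support_seg]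
    simp [Walk.support_reverse, support_seg, List.map_reverse]
  have key : ∀ i ∈ List.range' ia (ib - ia + 1), ∀ j ∈ List.range' ia (ib - ia + 1),
      v i = v j → i = j := by
    intro i hi j hj hv
    simp only [List.mem_range'_1] at hi hj
    exact hinj i (by omega) j (by omega) hv
  refine ⟨p₁, p₂, p₃, ?_, ?_, ?_, ?_, ?_, ?_, ?_, ?_, ?_⟩
  · rw [Walk.isPath_def, hs₁]
    exact (List.nodup_range').map_on key
  · rw [Walk.isPath_def, hs₂]
    simp only [List.nodup_cons, List.mem_singleton, List.nodup_nil, and_true,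
      List.not_mem_nil, not_false_iff]
    intro h
    have := hinj ia (by omega) ib (by omega) h; omega
  · rw [Walk.isPath_def, hs₃]
    refine List.Nodup.map_on ?_ ?_
    · intro i hi j hj hv
      simp only [List.mem_append, List.mem_reverse, List.mem_range'_1] at hi hj
      exact hinj i (by omega) j (by omega) hv
    · rw [List.nodup_append]
      refine ⟨List.nodup_reverse.mpr List.nodup_range',
        List.nodup_reverse.mpr List.nodup_range', ?_⟩
      intro i hi j hj hij
      simp only [List.mem_reverse, List.mem_range'_1] at hi hj
      omega
  · intro h
    have : p₁.length = p₂.length := by rw [h]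
    rw [length_seg] at this
    simp [hp₂] at this
    omega
  · intro h
    have hm : v (ia + 1) ∈ p₁.support := by
      rw [hs₁]
      exact List.mem_map_of_mem (f := v) (by simp only [List.mem_range'_1]; omega)
    rw [h, hs₃] at hm
    obtain ⟨m, hm1, hm2⟩ := List.mem_map.mp hm
    simp only [List.mem_append, List.mem_reverse, List.mem_range'_1] at hm1
    have := hinj m (by omega) (ia + 1) (by omega) hm2
    omega
  · intro h
    have : p₂.length = p₃.length := by rw [h]
    simp only [hp₂, hp₃, Walk.length_append, Walk.length_reverse, Walk.length_cons,
      Walk.length_nil, length_seg] at this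
    omega
  · intro w h1' h2'
    rw [hs₁] at h1'
    rw [hs₂] at h2'
    obtain ⟨m, hm1, rfl⟩ := List.mem_map.mp h1'
    simp only [List.mem_range'_1] at hm1
    rcases List.mem_cons.mp h2' with h | h
    · exact Or.inl h
    · exact Or.inr (by simpa using h)
  · intro w h1' h2'
    rw [hs₁] at h1'
    rw [hs₃] at h2'
    obtain ⟨m, hm1, rfl⟩ := List.mem_map.mp h1'
    obtain ⟨m', hm2, hv⟩ := List.mem_map.mp h2'
    simp only [List.mem_range'_1] at hm1
    simp only [List.mem_append, List.mem_reverse, List.mem_range'_1] at hm2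
    have := hinj m' (by omega) m (by omega) hv
    have : m = ia ∨ m = ib := by omega
    rcases this with rfl | rfl
    · exact Or.inl rfl
    · exact Or.inr rfl
  · intro w h1' h2'
    rw [hs₂] at h1'
    rcases List.mem_cons.mp h1' with h | h
    · exact Or.inl h
    · exact Or.inr (by simpa using h)

end Stmt13Aux

/-- If H is k-regular (k ≥ 1) with an edge, contains a self-avoiding path of length 8,
and for every such path the endpoints of e₁, e₈ span an additional edge and the
endpoints of e₃, e₆ span an additional edge, then H has two vertices joined by three
internally disjoint paths. -/
theorem stmt13 {V : Type*} (H : SimpleGraph V) [H.LocallyFinite]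
    (k : ℕ) (hk : 1 ≤ k) (hreg : ∀ v : V, H.degree v = k)
    (hedge : ∃ a b : V, H.Adj a b)
    (hpath : ∃ v : ℕ → V, IsSAP8 H v)
    (hf₂ : ∀ v : ℕ → V, IsSAP8 H v →
      ∃ a b : V, (a = v 2 ∨ a = v 3) ∧ (b = v 5 ∨ b = v 6) ∧ H.Adj a b ∧
        ∀ i < 8, s(a, b) ≠ s(v i, v (i + 1)))
    (hf₁ : ∀ v : ℕ → V, IsSAP8 H v →
      ∃ a b : V, (a = v 0 ∨ a = v 1) ∧ (b = v 7 ∨ b = v 8) ∧ H.Adj a b ∧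
        ∀ i < 8, s(a, b) ≠ s(v i, v (i + 1))) :
    ThreeDisjointPaths H := by
  obtain ⟨v, hv⟩ := hpath
  obtain ⟨hadj, hinj⟩ := hv
  obtain ⟨a, b, ha, hb, hab, -⟩ := hf₂ v ⟨hadj, hinj⟩
  obtain ⟨c, d, hc, hd, hcd, -⟩ := hf₁ v ⟨hadj, hinj⟩
  rcases ha with rfl | rfl <;> rcases hb with rfl | rfl <;>
    rcases hc with rfl | rfl <;> rcases hd with rfl | rfl <;>
    exact Stmt13Aux.main hadj hinj hab hcd (by omega) (by omega) (by omega) (by omega)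
      (by omega) (by omega) (by omega)
end
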